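/- In the reachability-safety game constructed from two ATSs K and K', the set Win2 = { (w,w') | the vertex ⟨w,w'⟩ is winning for player 2 for the safety objective Safe(F) } is an alternating simulation relation from K to K'. -/

import Mathlib

/-- A labeled alternating transition system (ATS). -/
structure ATS (Obs W A1 A2 : Type*) where
  init : W
  P1 : W → Set A1
  P2 : W → Set A2
  P1_nonempty : ∀ w, (P1 w).Nonempty
  P2_nonempty : ∀ w, (P2 w).Nonempty
  L : W → Obs
  δ : W → A1 → A2 → W

variable {Obs W A1 A2 W' A1' A2' : Type*}

/-- `Succ(w,a) = { δ(w,a,b) | b ∈ P2(w) }`. -/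
def SuccSet (K : ATS Obs W A1 A2) (w : W) (a : A1) : Set W :=
  (fun b => K.δ w a b) '' K.P2 w

/-- `Succ(K) = { Succ(w,a) | w ∈ W, a ∈ P1(w) }`. -/
def SuccSets (K : ATS Obs W A1 A2) : Set (Set W) :=
  {T | ∃ w, ∃ a ∈ K.P1 w, T = SuccSet K w a}

/-- `S` is an alternating simulation from `K` to `K'`. -/
def IsAltSim (K : ATS Obs W A1 A2) (K' : ATS Obs W' A1' A2')
    (S : W → W' → Prop) : Prop :=
  ∀ w w', S w w' →
    K.L w = K'.L w' ∧
    ∀ a ∈ K.P1 w, ∃ a' ∈ K'.P1 w', ∀ b' ∈ K'.P2 w', ∃ b ∈ K.P2 w,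
      S (K.δ w a b) (K'.δ w' a' b')

/-- Vertices of the game graph for alternating simulation:
`pair w w'` is `⟨w,w'⟩`; `spair T T'` is `⟨T,T'⟩`; `mid T w' t` is
`⟨T,w',#⟩` when `t = false` and `⟨T,w',$⟩` when `t = true`. -/
inductive GVtx (W W' : Type*) where
  | pair : W → W' → GVtx W W'
  | spair : Set W → Set W' → GVtx W W'
  | mid : Set W → W' → Bool → GVtx W W'

/-- Edges `E = E1 ∪ E2 ∪ E3 ∪ E4` of the game graph. -/
inductive GEdge (K : ATS Obs W A1 A2) (K' : ATS Obs W' A1' A2') :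
    GVtx W W' → GVtx W W' → Prop
  | e1 {w : W} {w' : W'} {a : A1} (ha : a ∈ K.P1 w) :
      GEdge K K' (.pair w w') (.mid (SuccSet K w a) w' false)
  | e2 {T : Set W} {w' : W'} {a' : A1'} (hT : T ∈ SuccSets K)
      (ha' : a' ∈ K'.P1 w') :
      GEdge K K' (.mid T w' false) (.spair T (SuccSet K' w' a'))
  | e3 {T : Set W} {T' : Set W'} {r' : W'} (hT : T ∈ SuccSets K)
      (hT' : T' ∈ SuccSets K') (hr' : r' ∈ T') :
      GEdge K K' (.spair T T') (.mid T r' true)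
  | e4 {T : Set W} {r' : W'} {r : W} (hT : T ∈ SuccSets K) (hr : r ∈ T) :
      GEdge K K' (.mid T r' true) (.pair r r')

/-- Player-2 vertices of the game. -/
def isV2 : GVtx W W' → Prop
  | .mid _ _ _ => True
  | _ => False

/-- Player 2 wins the safety objective `Safe(F)` from `v0`, where the unsafe
set is `T = { ⟨w,w'⟩ | L(w) ≠ L'(w') }`: player 2 has a (history-dependent)
strategy, following edges whenever possible, such that every play from `v0`
consistent with it never visits a vertex `⟨w,w'⟩` with `L(w) ≠ L'(w')`. -/
def Player2WinsSafe (K : ATS Obs W A1 A2) (K' : ATS Obs W' A1' A2')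
    (v0 : GVtx W W') : Prop :=
  ∃ σ : List (GVtx W W') → GVtx W W' → GVtx W W',
    (∀ h v, (∃ u, GEdge K K' v u) → GEdge K K' v (σ h v)) ∧
    ∀ f : ℕ → GVtx W W', f 0 = v0 →
      (∀ n, GEdge K K' (f n) (f (n + 1))) →
      (∀ n, isV2 (f n) → f (n + 1) = σ (List.ofFn (fun i : Fin n => f i)) (f n)) →
      ∀ n w w', f n = .pair w w' → K.L w = K'.L w'

/-- The set `Win2` of state pairs `(w,w')` such that `⟨w,w'⟩` is winning for
player 2 for the safety objective is an alternating simulation from `K` to `K'`. -/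
lemma succSet_nonempty (K : ATS Obs W A1 A2) (w : W) (a : A1) :
    (SuccSet K w a).Nonempty := by
  obtain ⟨b, hb⟩ := K.P2_nonempty w
  exact ⟨K.δ w a b, ⟨b, hb, rfl⟩⟩

lemma succSets_nonempty {K : ATS Obs W A1 A2} {T : Set W} (hT : T ∈ SuccSets K) :
    T.Nonempty := by
  obtain ⟨w, a, ha, rfl⟩ := hT
  exact succSet_nonempty K w a

def Good (K : ATS Obs W A1 A2) (K' : ATS Obs W' A1' A2') : GVtx W W' → Prop
  | .pair _ _ => True
  | .mid T _ _ => T ∈ SuccSets K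
  | .spair T T' => T ∈ SuccSets K ∧ T' ∈ SuccSets K'

lemma good_of_edge {K : ATS Obs W A1 A2} {K' : ATS Obs W' A1' A2'}
    {v u : GVtx W W'} (h : GEdge K K' v u) : Good K K' u := by
  cases h with
  | e1 ha => exact ⟨_, _, ha, rfl⟩
  | e2 hT ha' => exact ⟨hT, _, _, ha', rfl⟩
  | e3 hT hT' hr' => exact hT
  | e4 hT hr => trivial

lemma good_exists_succ {K : ATS Obs W A1 A2} {K' : ATS Obs W' A1' A2'}
    {v : GVtx W W'} (h : Good K K' v) : ∃ u, GEdge K K' v u := by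
  cases v with
  | pair w w' =>
    obtain ⟨a, ha⟩ := K.P1_nonempty w
    exact ⟨_, .e1 ha⟩
  | mid T w' b =>
    cases b with
    | false =>
      obtain ⟨a', ha'⟩ := K'.P1_nonempty w'
      exact ⟨_, .e2 h ha'⟩
    | true =>
      obtain ⟨r, hr⟩ := succSets_nonempty h
      exact ⟨_, .e4 h hr⟩
  | spair T T' =>
    obtain ⟨hT, hT'⟩ := h
    obtain ⟨r', hr'⟩ := succSets_nonempty hT'
    exact ⟨_, .e3 hT hT' hr'⟩

open Classical in
noncomputable def nextV (K : ATS Obs W A1 A2) (K' : ATS Obs W' A1' A2')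
    (σ : List (GVtx W W') → GVtx W W' → GVtx W W')
    (h : List (GVtx W W')) (v : GVtx W W') : GVtx W W' :=
  if isV2 v then σ h v
  else if he : ∃ u, GEdge K K' v u then he.choose else v

lemma nextV_edge {K : ATS Obs W A1 A2} {K' : ATS Obs W' A1' A2'}
    {σ : List (GVtx W W') → GVtx W W' → GVtx W W'}
    (hσ : ∀ h v, (∃ u, GEdge K K' v u) → GEdge K K' v (σ h v))
    {v : GVtx W W'} (hg : Good K K' v) (h : List (GVtx W W')) :
    GEdge K K' v (nextV K K' σ h v) := by
  classical
  have he := good_exists_succ hg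
  by_cases hv : isV2 v
  · rw [nextV, if_pos hv]; exact hσ h v he
  · rw [nextV, if_neg hv, dif_pos he]; exact he.choose_spec

noncomputable def playF (K : ATS Obs W A1 A2) (K' : ATS Obs W' A1' A2')
    (σ : List (GVtx W W') → GVtx W W' → GVtx W W') (v0 : GVtx W W') :
    ℕ → List (GVtx W W') × GVtx W W'
  | 0 => ([], v0)
  | n + 1 =>
    let p := playF K K' σ v0 n
    (p.1 ++ [p.2], nextV K K' σ p.1 p.2)

lemma playF_good {K : ATS Obs W A1 A2} {K' : ATS Obs W' A1' A2'}
    {σ : List (GVtx W W') → GVtx W W' → GVtx W W'}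
    (hσ : ∀ h v, (∃ u, GEdge K K' v u) → GEdge K K' v (σ h v))
    {v0 : GVtx W W'} (h0 : Good K K' v0) :
    ∀ n, Good K K' (playF K K' σ v0 n).2 := by
  intro n
  induction n with
  | zero => exact h0
  | succ n ih => exact good_of_edge (nextV_edge hσ ih _)

lemma playF_hist {K : ATS Obs W A1 A2} {K' : ATS Obs W' A1' A2'}
    (σ : List (GVtx W W') → GVtx W W' → GVtx W W') (v0 : GVtx W W') :
    ∀ n, (playF K K' σ v0 n).1 =
      List.ofFn (fun i : Fin n => (playF K K' σ v0 i).2) := by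
  intro n
  induction n with
  | zero => rfl
  | succ n ih =>
    show (playF K K' σ v0 n).1 ++ [(playF K K' σ v0 n).2] = _
    rw [ih, List.ofFn_succ']
    simp [List.concat_eq_append]

theorem win2_isAltSim (K : ATS Obs W A1 A2) (K' : ATS Obs W' A1' A2') :
    IsAltSim K K' (fun w w' => Player2WinsSafe K K' (.pair w w')) := by
  intro w w' hwin
  obtain ⟨σ, hσ, hwin⟩ := hwin
  constructor
  · -- L w = L' w'
    have hgood := playF_good hσ (v0 := GVtx.pair w w') trivial
    refine hwin (fun n => (playF K K' σ (.pair w w') n).2) rfl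
      (fun n => ?_) (fun n hv => ?_) 0 w w' rfl
    · exact nextV_edge hσ (hgood n) _
    · show nextV K K' σ (playF K K' σ (.pair w w') n).1 _ = _
      rw [playF_hist, nextV, if_pos hv]
  · intro a ha
    have hT : SuccSet K w a ∈ SuccSets K := ⟨w, a, ha, rfl⟩
    have hex1 : ∃ u, GEdge K K' (GVtx.mid (SuccSet K w a) w' false) u := by
      obtain ⟨a'0, ha'0⟩ := K'.P1_nonempty w'
      exact ⟨_, .e2 hT ha'0⟩
    have he1 := hσ [GVtx.pair w w'] _ hex1
    generalize hq1 :
      σ [GVtx.pair w w'] (GVtx.mid (SuccSet K w a) w' false) = u1 at he1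
    obtain ⟨a', ha', hu1⟩ : ∃ a' ∈ K'.P1 w',
        u1 = GVtx.spair (SuccSet K w a) (SuccSet K' w' a') := by
      cases he1 with
      | e2 hT2 ha2 => exact ⟨_, ha2, rfl⟩
    refine ⟨a', ha', ?_⟩
    intro b' hb'
    have hT' : SuccSet K' w' a' ∈ SuccSets K' := ⟨w', a', ha', rfl⟩
    have hr' : K'.δ w' a' b' ∈ SuccSet K' w' a' := ⟨b', hb', rfl⟩
    have hex3 : ∃ u,
        GEdge K K' (GVtx.mid (SuccSet K w a) (K'.δ w' a' b') true) u := by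
      obtain ⟨r0, hr0⟩ := succSets_nonempty hT
      exact ⟨_, .e4 hT hr0⟩
    have he3 := hσ [GVtx.pair w w', GVtx.mid (SuccSet K w a) w' false,
      GVtx.spair (SuccSet K w a) (SuccSet K' w' a')] _ hex3
    generalize hq3 :
      σ [GVtx.pair w w', GVtx.mid (SuccSet K w a) w' false,
        GVtx.spair (SuccSet K w a) (SuccSet K' w' a')]
        (GVtx.mid (SuccSet K w a) (K'.δ w' a' b') true) = u3 at he3
    obtain ⟨r, hr, hu3⟩ : ∃ r ∈ SuccSet K w a,
        u3 = GVtx.pair r (K'.δ w' a' b') := by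
      cases he3 with
      | e4 hT4 hr4 => exact ⟨_, hr4, rfl⟩
    obtain ⟨b, hb, hbeq⟩ := hr
    have hr : r ∈ SuccSet K w a := ⟨b, hb, hbeq⟩
    refine ⟨b, hb, ?_⟩
    show Player2WinsSafe K K' (GVtx.pair (K.δ w a b) (K'.δ w' a' b'))
    rw [show K.δ w a b = r from hbeq]
    refine ⟨fun h v => σ ([GVtx.pair w w', GVtx.mid (SuccSet K w a) w' false,
      GVtx.spair (SuccSet K w a) (SuccSet K' w' a'),
      GVtx.mid (SuccSet K w a) (K'.δ w' a' b') true] ++ h) v,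
      fun h v hex => hσ _ _ hex, ?_⟩
    intro f hf0 hfe hfc
    set pre : List (GVtx W W') := [GVtx.pair w w',
      GVtx.mid (SuccSet K w a) w' false,
      GVtx.spair (SuccSet K w a) (SuccSet K' w' a'),
      GVtx.mid (SuccSet K w a) (K'.δ w' a' b') true] with hpre
    set g : ℕ → GVtx W W' := fun n => match n with
      | 0 => GVtx.pair w w'
      | 1 => GVtx.mid (SuccSet K w a) w' false
      | 2 => GVtx.spair (SuccSet K w a) (SuccSet K' w' a')
      | 3 => GVtx.mid (SuccSet K w a) (K'.δ w' a' b') true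
      | (n+4) => f n
      with hg
    have hlist : ∀ m, List.ofFn (fun i : Fin (m+4) => g i)
        = pre ++ List.ofFn (fun i : Fin m => f i) := by
      intro m
      apply List.ext_getElem
      · simp [hpre]
      intro i h1 h2
      simp only [List.getElem_ofFn]
      by_cases hi : i < 4
      · rw [List.getElem_append_left (by simp [hpre]; omega)]
        interval_cases i <;> rfl
      · obtain ⟨j, rfl⟩ : ∃ j, i = j + 4 := ⟨i - 4, by omega⟩
        rw [List.getElem_append_right (by simp [hpre])]
        simp [hpre, List.getElem_ofFn]
        rfl
    have gedges : ∀ n, GEdge K K' (g n) (g (n + 1)) := by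
      intro n
      match n with
      | 0 => exact .e1 ha
      | 1 => exact .e2 hT ha'
      | 2 => exact .e3 hT hT' hr'
      | 3 => show GEdge K K' _ (f 0); rw [hf0]; exact .e4 hT hr
      | (n+4) => exact hfe n
    have gcons : ∀ n, isV2 (g n) →
        g (n + 1) = σ (List.ofFn (fun i : Fin n => g i)) (g n) := by
      intro n hv
      match n with
      | 0 => exact False.elim hv
      | 1 =>
        have h1 : List.ofFn (fun i : Fin 1 => g i) = [GVtx.pair w w'] := by
          simp [List.ofFn_succ]
          rfl
        rw [h1]
        show GVtx.spair (SuccSet K w a) (SuccSet K' w' a') = _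
        rw [hq1, hu1]
      | 2 => exact False.elim hv
      | 3 =>
        have h3 : List.ofFn (fun i : Fin 3 => g i)
            = [GVtx.pair w w', GVtx.mid (SuccSet K w a) w' false,
               GVtx.spair (SuccSet K w a) (SuccSet K' w' a')] := by
          simp [List.ofFn_succ]
          exact ⟨rfl, rfl, rfl⟩
        rw [h3]
        show f 0 = _
        rw [hq3, hu3, hf0]
      | (n+4) =>
        show f (n + 1) = _
        rw [hlist n]
        exact hfc n hv
    intro n u u' hn
    exact hwin g rfl gedges gcons (n + 4) u u' hn
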